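/- Let K be a number field of degree n > 1. Let O_K^⊥ = (ℤ + n·O_K) ∩ O_K^0 be the image of O_K under the projection α ↦ nα − tr_{K/ℚ}(α). Then the determinant of the trace pairing restricted to O_K^⊥ equals n^{2n−3}·Disc(K). -/

import Mathlib

open NumberField Module Matrix

lemma aux_rat_mem {K : Type*} [Field K] [NumberField K] (x : 𝓞 K) (q : ℚ)
    (hx : (algebraMap (𝓞 K) K x) = algebraMap ℚ K q) : ∃ d : ℤ, x = d • 1 := by
  have h1 : IsIntegral ℤ (algebraMap ℚ K q) := hx ▸ RingOfIntegers.isIntegral_coe x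
  have hint : IsIntegral ℤ q := (isIntegral_algebraMap_iff ((algebraMap ℚ K).injective)).mp h1
  obtain ⟨d, hd⟩ := IsIntegrallyClosed.isIntegral_iff.mp hint
  refine ⟨d, RingOfIntegers.coe_injective ?_⟩
  rw [hx, ← hd]
  push_cast
  simp

lemma aux_unit {K : Type*} [Field K] [NumberField K] (u : ℤ) (x : 𝓞 K)
    (hux : (1 : 𝓞 K) = u • x) : IsUnit u := by
  have hu0 : u ≠ 0 := by
    rintro rfl
    simp at hux
  have hxK : (algebraMap (𝓞 K) K x) = algebraMap ℚ K ((u : ℚ)⁻¹) := by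
    have : (u : K) * (algebraMap (𝓞 K) K x) = 1 := by
      have := congrArg (algebraMap (𝓞 K) K) hux
      simpa [Algebra.smul_def] using this.symm
    have hu0' : (u : K) ≠ 0 := by exact_mod_cast hu0
    rw [map_inv₀, show (algebraMap ℚ K ((u:ℤ):ℚ)) = ((u:ℤ):K) by simp]
    exact eq_inv_of_mul_eq_one_right this
  obtain ⟨d, hd⟩ := aux_rat_mem x _ hxK
  refine IsUnit.of_mul_eq_one (a := u) d ?_
  have : ((u * d : ℤ) : 𝓞 K) = ((1 : ℤ) : 𝓞 K) := by
    push_cast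
    rw [hux, hd]
    simp [smul_smul, zsmul_eq_mul]
  exact_mod_cast this

lemma exists_basis_one {K : Type*} [Field K] [NumberField K] (n : ℕ) [NeZero n]
    (hn : Module.finrank ℚ K = n) : ∃ e : Basis (Fin n) ℤ (𝓞 K), e 0 = 1 := by
  classical
  set N : Submodule ℤ (𝓞 K) := Submodule.span ℤ {(1 : 𝓞 K)} with hN
  obtain ⟨m, snf⟩ := N.smithNormalForm (RingOfIntegers.basis K)
  have hN1 : (1 : 𝓞 K) ∈ N := Submodule.mem_span_singleton_self _
  have hinj : Function.Injective (LinearMap.toSpanSingleton ℤ (𝓞 K) 1) := by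
    intro a b hab
    simpa using hab
  have hrange : LinearMap.range (LinearMap.toSpanSingleton ℤ (𝓞 K) 1) = N := by
    rw [hN, LinearMap.span_singleton_eq_range]
  have heq : (ℤ ≃ₗ[ℤ] N) :=
    (LinearEquiv.ofInjective _ hinj).trans (LinearEquiv.ofEq _ _ hrange)
  have hfrN : finrank ℤ N = 1 := by
    rw [← heq.finrank_eq, finrank_self]
  have hm : m = 1 := by
    have := finrank_eq_card_basis snf.bN
    simp [hfrN] at this
    omega
  subst hm
  set i0 := snf.f 0 with hi0
  have hsum := snf.bN.sum_repr ⟨1, hN1⟩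
  rw [Fin.sum_univ_one] at hsum
  set u : ℤ := snf.bN.repr ⟨1, hN1⟩ 0 * snf.a 0 with hu
  have h1 : (1 : 𝓞 K) = u • snf.bM i0 := by
    have := congrArg (Subtype.val) hsum
    simp only [Submodule.coe_smul] at this
    rw [snf.snf 0] at this
    rw [← this, smul_smul, hu]
  have hU : IsUnit u := aux_unit u _ h1
  set w : _ → ℤˣ := fun i => if i = i0 then hU.unit else 1 with hw
  set e1 := snf.bM.unitsSMul w with he1
  have he1i0 : e1 i0 = 1 := by
    have hwi0 : w i0 = hU.unit := by simp [hw]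
    rw [he1, Basis.unitsSMul_apply, hwi0, Units.smul_def, hU.unit_spec, ← h1]
  -- reindex to Fin n
  have hcard : Fintype.card (Module.Free.ChooseBasisIndex ℤ (𝓞 K)) = n := by
    rw [← finrank_eq_card_basis snf.bM, RingOfIntegers.rank, hn]
  let g0 := Fintype.equivFinOfCardEq hcard
  let g := g0.trans (Equiv.swap (g0 i0) 0)
  refine ⟨e1.reindex g, ?_⟩
  rw [Basis.reindex_apply]
  have : g.symm 0 = i0 := by
    show g0.symm ((Equiv.swap (g0 i0) 0).symm 0) = i0
    rw [Equiv.symm_swap, Equiv.swap_apply_right, Equiv.symm_apply_apply]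
  rw [this, he1i0]

/-- The determinant of the trace pairing restricted to
`O_K^⊥ = {nα − tr(α) : α ∈ O_K}` equals `n^(2n−3) · Disc(K)`. -/
theorem stmt_1 (K : Type*) [Field K] [NumberField K]
    (n : ℕ) (hn : 1 < n) (hdeg : Module.finrank ℚ K = n)
    (f : 𝓞 K →ₗ[ℤ] 𝓞 K)
    (hf : ∀ x : 𝓞 K, f x = n • x - (Algebra.trace ℤ (𝓞 K) x) • (1 : 𝓞 K))
    (b : Basis (Fin (n - 1)) ℤ (LinearMap.range f)) :
    (Matrix.of fun i j =>
        Algebra.trace ℤ (𝓞 K) ((b i : 𝓞 K) * (b j : 𝓞 K))).det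
      = (n : ℤ) ^ (2 * n - 3) * NumberField.discr K := by
  classical
  set_option maxHeartbeats 1000000 in
  haveI : NeZero n := ⟨by omega⟩
  obtain ⟨m, rfl⟩ : ∃ m, n = m + 1 := ⟨n - 1, by omega⟩
  have hm1 : 1 ≤ m := by omega
  let b' : Basis (Fin m) ℤ (LinearMap.range f) := b
  show (Matrix.of fun i j =>
        Algebra.trace ℤ (𝓞 K) ((b' i : 𝓞 K) * (b' j : 𝓞 K))).det
      = ((m+1 : ℕ) : ℤ) ^ (2 * (m+1) - 3) * NumberField.discr K
  obtain ⟨e, he0⟩ := exists_basis_one (K := K) (m+1) hdeg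
  have hrank : finrank ℤ (𝓞 K) = m + 1 := by rw [RingOfIntegers.rank, hdeg]
  have htr1 : Algebra.trace ℤ (𝓞 K) 1 = ((m+1 : ℕ) : ℤ) := by
    rw [← map_one (algebraMap ℤ (𝓞 K)), Algebra.trace_algebraMap, hrank]
    simp
  set t : Fin (m+1) → ℤ := fun k => Algebra.trace ℤ (𝓞 K) (e k) with ht
  set c : Fin (m+1) → 𝓞 K := fun k => f (e k) with hcdef
  have hc : ∀ k, c k = (m+1) • e k - t k • 1 := fun k => hf (e k)
  have ht0 : t 0 = ((m+1:ℕ) : ℤ) := by rw [ht]; simp only [he0, htr1]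
  have hc0 : c 0 = 0 := by
    rw [hc 0, ht0, he0, sub_eq_zero, ← Nat.cast_smul_eq_nsmul ℤ]
  have htrc : ∀ k, Algebra.trace ℤ (𝓞 K) (c k) = 0 := by
    intro k
    rw [hc k, map_sub, map_nsmul, _root_.map_smul, htr1]
    simp only [nsmul_eq_mul, smul_eq_mul]
    ring
  set v : Fin (m+1) → 𝓞 K := fun j => if j = 0 then 1 else c j with hv
  set P := e.toMatrix v with hP
  have hvec : ⇑e ᵥ* (P.map (algebraMap ℤ (𝓞 K))) = v := by
    funext j
    rw [show (⇑e ᵥ* (P.map (algebraMap ℤ (𝓞 K)))) j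
        = ∑ k, P k j • e k by
      simp [Matrix.vecMul, dotProduct, Matrix.map_apply, Algebra.smul_def, mul_comm]]
    exact e.sum_toMatrix_smul_self v j
  have hdiscr_v : Algebra.discr ℤ v = P.det ^ 2 * (discr K) := by
    rw [← hvec, hP, Algebra.discr_of_matrix_vecMul, discr_eq_discr K e]
  have hP0 : ∀ k, P k 0 = if k = 0 then 1 else 0 := by
    intro k
    rw [hP, Basis.toMatrix_apply]
    simp only [hv, if_pos rfl, ← he0, Basis.repr_self]
    rw [Finsupp.single_apply]
    simp [eq_comm]
  have hPsucc : ∀ (k) (j : Fin m), P k j.succ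
      = (if k = j.succ then ((m+1:ℕ):ℤ) else 0) - (if k = 0 then t j.succ else 0) := by
    intro k j
    rw [hP, Basis.toMatrix_apply]
    simp only [hv, if_neg (Fin.succ_ne_zero j)]
    rw [hc j.succ, ← he0, map_sub, map_nsmul, _root_.map_smul, Basis.repr_self, Basis.repr_self]
    rw [Finsupp.sub_apply, Finsupp.smul_apply, Finsupp.smul_apply, Finsupp.single_apply,
      Finsupp.single_apply]
    simp only [smul_eq_mul, nsmul_eq_mul, eq_comm]
    split_ifs <;> ring
  have hdetP : P.det = ((m+1:ℕ):ℤ)^m := by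
    rw [Matrix.det_succ_column_zero, Finset.sum_eq_single 0]
    · rw [hP0 0, if_pos rfl]
      have hsub : (P.submatrix (Fin.succAbove 0) Fin.succ)
          = Matrix.diagonal (fun _ : Fin m => ((m+1:ℕ):ℤ)) := by
        ext i j
        rw [Matrix.submatrix_apply, Fin.succAbove_zero, hPsucc, Matrix.diagonal_apply]
        simp [Fin.succ_ne_zero, Fin.succ_inj, eq_comm]
      rw [hsub, Matrix.det_diagonal]
      simp
    · intro i _ hi
      rw [hP0 i, if_neg hi]
      ring
    · intro h
      exact absurd (Finset.mem_univ 0) h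
  set G : Matrix (Fin m) (Fin m) ℤ :=
    Matrix.of (fun i j : Fin m => Algebra.trace ℤ (𝓞 K) (c i.succ * c j.succ)) with hG
  set T := Algebra.traceMatrix ℤ v with hT
  have hTdet : T.det = ((m+1:ℕ):ℤ) * G.det := by
    rw [Matrix.det_succ_column_zero, Finset.sum_eq_single 0]
    · have h00 : T 0 0 = ((m+1:ℕ):ℤ) := by
        rw [hT, Algebra.traceMatrix_apply, Algebra.traceForm_apply]
        simp only [hv, if_pos rfl, mul_one, htr1]
      have hsub : (T.submatrix (Fin.succAbove 0) Fin.succ) = G := by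
        ext i j
        rw [Matrix.submatrix_apply, Fin.succAbove_zero, hT, Algebra.traceMatrix_apply,
          Algebra.traceForm_apply]
        simp [hv, Fin.succ_ne_zero, hG]
      rw [h00, hsub]
      simp
    · intro i _ hi
      have : T i 0 = 0 := by
        rw [hT, Algebra.traceMatrix_apply, Algebra.traceForm_apply]
        simp only [hv, if_pos rfl, if_neg hi, mul_one]
        exact htrc i
      rw [this]
      ring
    · intro h
      exact absurd (Finset.mem_univ 0) h
  have hGdet : G.det = ((m+1:ℕ):ℤ)^(2*m-1) * discr K := by
    have hne : ((m+1:ℕ):ℤ) ≠ 0 := by positivity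
    refine mul_left_cancel₀ hne ?_
    rw [← hTdet, hT, show (Algebra.traceMatrix ℤ v).det = Algebra.discr ℤ v from rfl,
      hdiscr_v, hdetP]
    rw [← pow_mul, ← mul_assoc, ← pow_succ']
    congr 2
    omega
  -- basis of range f
  set w : Fin m → LinearMap.range f := fun i => ⟨c i.succ, ⟨e i.succ, rfl⟩⟩ with hwdef
  have hindep' : LinearIndependent ℤ (fun i : Fin m => c i.succ) := by
    rw [Fintype.linearIndependent_iff]
    intro g hg i
    have hx : f (∑ j, g j • e j.succ) = 0 := by
      rw [map_sum]
      simp only [_root_.map_smul]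
      exact hg
    rw [hf] at hx
    have hx2 : (m+1) • (∑ j, g j • e j.succ)
        = (Algebra.trace ℤ (𝓞 K) (∑ j, g j • e j.succ)) • e 0 := by
      rw [he0]
      exact sub_eq_zero.mp hx
    have hco := congrArg (fun z => e.repr z i.succ) hx2
    simp only [map_nsmul, _root_.map_smul, map_sum, Basis.repr_self, Finsupp.smul_apply,
      Finsupp.coe_finset_sum, Finset.sum_apply, Finsupp.single_apply] at hco
    rw [Finset.sum_eq_single i] at hco
    · simp only [if_pos rfl, Fin.succ_ne_zero] at hco
      have : ((m+1:ℕ):ℤ) * g i = 0 := by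
        rw [← Nat.cast_smul_eq_nsmul ℤ] at hco
        simpa [smul_eq_mul, (Fin.succ_ne_zero i).symm] using hco
      have hne : ((m+1:ℕ):ℤ) ≠ 0 := by positivity
      exact (mul_eq_zero.mp this).resolve_left hne
    · intro j _ hj
      simp [Fin.succ_inj, hj]
    · intro h
      exact absurd (Finset.mem_univ i) h
  have hindep : LinearIndependent ℤ w := by
    apply LinearIndependent.of_comp (LinearMap.range f).subtype
    convert hindep'
    rfl
  have hspan : ⊤ ≤ Submodule.span ℤ (Set.range w) := by
    rintro ⟨y, hy⟩ -
    obtain ⟨x, rfl⟩ := hy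
    have hx : f x = ∑ i : Fin m, e.repr x i.succ • c i.succ := by
      conv_lhs => rw [← e.sum_repr x]
      rw [map_sum]
      simp only [_root_.map_smul]
      rw [Fin.sum_univ_succ, show f (e 0) = c 0 from rfl, hc0, smul_zero, zero_add]
    have heq : (⟨f x, ⟨x, rfl⟩⟩ : LinearMap.range f)
        = ∑ i : Fin m, e.repr x i.succ • w i := by
      apply Subtype.ext
      show f x = ((∑ i : Fin m, e.repr x i.succ • w i : LinearMap.range f) : 𝓞 K)
      rw [hx, Submodule.coe_sum]
      rfl
    rw [heq]
    exact Submodule.sum_smul_mem _ _ (fun i _ => Submodule.subset_span ⟨i, rfl⟩)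
  set cb : Basis (Fin m) ℤ (LinearMap.range f) := Basis.mk hindep hspan with hcb
  set Q := cb.toMatrix ⇑b' with hQ
  have hbw : (fun i => ((b' i : 𝓞 K)))
      = (fun k : Fin m => c k.succ) ᵥ* (Q.map (algebraMap ℤ (𝓞 K))) := by
    funext i
    have h1 : ∑ k, Q k i • cb k = b' i := cb.sum_toMatrix_smul_self b' i
    have h3 : ∀ k, ((cb k : 𝓞 K)) = c k.succ := by
      intro k
      rw [hcb, Basis.mk_apply]
    have h2 : ((b' i : 𝓞 K)) = ∑ k, Q k i • (cb k : 𝓞 K) := by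
      rw [← h1, Submodule.coe_sum]
      rfl
    rw [h2]
    simp only [Matrix.vecMul, dotProduct, Matrix.map_apply]
    refine Finset.sum_congr rfl fun k _ => ?_
    rw [h3 k, Algebra.smul_def, mul_comm]
  have hgram : (Matrix.of fun i j =>
      Algebra.trace ℤ (𝓞 K) ((b' i : 𝓞 K) * (b' j : 𝓞 K))) = Qᵀ * G * Q := by
    have h2 := Algebra.traceMatrix_of_matrix_vecMul (A := ℤ) (fun k : Fin m => c k.succ) Q
    rw [← hbw] at h2
    have h3 : Algebra.traceMatrix ℤ (fun k : Fin m => c k.succ) = G := by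
      ext i j
      rw [Algebra.traceMatrix_apply, Algebra.traceForm_apply]
      rfl
    rw [h3] at h2
    rw [← h2]
    ext i j
    rw [Algebra.traceMatrix_apply, Algebra.traceForm_apply]
    rfl
  have hdetQ : Q.det * Q.det = 1 := by
    have h4 := congrArg Matrix.det (cb.toMatrix_mul_toMatrix_flip b')
    rw [Matrix.det_mul, Matrix.det_one] at h4
    have h5 : IsUnit Q.det := IsUnit.of_mul_eq_one _ h4
    rcases Int.isUnit_iff.mp h5 with h | h <;> rw [h] <;> norm_num
  rw [hgram, Matrix.det_mul, Matrix.det_mul, Matrix.det_transpose]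
  rw [show Q.det * G.det * Q.det = (Q.det * Q.det) * G.det by ring, hdetQ, one_mul, hGdet,
    show 2 * (m+1) - 3 = 2 * m - 1 from by omega]
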